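/- With Φ and X as above, and with the weighted metric d(u,v) := sup_{x ∈ B_σ(x̄)} e^{-K|x - x̄|} |u(x) - v(x)| where K := 2LN, the map Φ : X → X satisfies d(Φ[u], Φ[v]) ≤ (1/2) d(u,v) for all u, v ∈ X; hence Φ has a unique fixed point. -/

import Mathlib

open Set Function

/-- The weighted distance `d(u,v) := sup_{x ∈ B_σ(xbar)} e^{-K|x-xbar|₁} |u(x)-v(x)|₁`
used in the proof of Darboux's first theorem. -/
noncomputable def darbouxDist (n N : ℕ) (xbar : Fin n → ℝ) (σ K : ℝ)
    (u v : Fin N → (Fin n → ℝ) → ℝ) : ℝ :=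
  sSup ((fun x : Fin n → ℝ =>
    Real.exp (-(K * ∑ j, |x j - xbar j|)) * ∑ h, |u h x - v h x|) ''
    {x : Fin n → ℝ | ∑ j, |x j - xbar j| ≤ σ})

/-- The Picard-type map of the proof of Darboux's first theorem. -/
noncomputable def darbouxPhi (n N : ℕ) (idx : Fin N → Fin n)
    (f : Fin N → (Fin n → ℝ) → (Fin N → ℝ) → ℝ)
    (φ : Fin N → (Fin n → ℝ) → ℝ) (xbar : Fin n → ℝ)
    (u : Fin N → (Fin n → ℝ) → ℝ) : Fin N → (Fin n → ℝ) → ℝ :=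
  fun h x => φ h x +
    ∫ ξ in (xbar (idx h))..(x (idx h)),
      f h (Function.update x (idx h) ξ) (fun m => u m (Function.update x (idx h) ξ))

/-- Membership in the complete metric space `X` of the proof of Darboux's first
theorem: continuity on `B_σ(xbar)` together with `|u - φ|₁ ≤ b/2` there. -/
def memDarbouxX (n N : ℕ) (φ : Fin N → (Fin n → ℝ) → ℝ) (xbar : Fin n → ℝ)
    (b σ : ℝ) (u : Fin N → (Fin n → ℝ) → ℝ) : Prop :=
  ContinuousOn (fun x h => u h x) {x : Fin n → ℝ | ∑ j, |x j - xbar j| ≤ σ} ∧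
  ∀ x : Fin n → ℝ, (∑ j, |x j - xbar j| ≤ σ) → ∑ h, |u h x - φ h x| ≤ b / 2


open Set Function

lemma darbouxSumUpdate {n : ℕ} (x xbar : Fin n → ℝ) (i : Fin n) (ξ : ℝ) :
    ∑ j, |Function.update x i ξ j - xbar j|
      = (∑ j ∈ Finset.univ.erase i, |x j - xbar j|) + |ξ - xbar i| := by
  rw [← Finset.sum_erase_add _ _ (Finset.mem_univ i), Function.update_self]
  congr 1
  exact Finset.sum_congr rfl fun j hj => by
    rw [Function.update_of_ne (Finset.ne_of_mem_erase hj)]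

lemma darbouxSumSplit {n : ℕ} (x xbar : Fin n → ℝ) (i : Fin n) :
    ∑ j, |x j - xbar j|
      = (∑ j ∈ Finset.univ.erase i, |x j - xbar j|) + |x i - xbar i| := by
  have := darbouxSumUpdate x xbar i (x i)
  rwa [Function.update_eq_self] at this

lemma darbouxUpdateMem {n : ℕ} {x xbar : Fin n → ℝ} {i : Fin n} {ξ σ : ℝ}
    (hx : ∑ j, |x j - xbar j| ≤ σ) (hξ : ξ ∈ Set.uIcc (xbar i) (x i)) :
    ∑ j, |Function.update x i ξ j - xbar j| ≤ σ := by
  have h1 : |ξ - xbar i| ≤ |x i - xbar i| := by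
    rw [Set.uIcc_eq_union] at hξ
    rcases hξ with h | h <;> rw [abs_sub_le_iff] <;> constructor <;>
      rcases h with ⟨h2, h3⟩ <;> cases abs_cases (x i - xbar i) <;> nlinarith [abs_nonneg (x i - xbar i), le_abs_self (x i - xbar i), neg_abs_le (x i - xbar i)]
  calc ∑ j, |Function.update x i ξ j - xbar j|
      = (∑ j ∈ Finset.univ.erase i, |x j - xbar j|) + |ξ - xbar i| := darbouxSumUpdate ..
    _ ≤ (∑ j ∈ Finset.univ.erase i, |x j - xbar j|) + |x i - xbar i| := by linarith
    _ = ∑ j, |x j - xbar j| := (darbouxSumSplit ..).symm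
    _ ≤ σ := hx

open Set Function intervalIntegral MeasureTheory

lemma darbouxExpBoundLe (K L d c A B : ℝ) (hK : 0 < K) (hL : 0 ≤ L) (hd : 0 ≤ d)
    (hAB : A ≤ B)
    (g : ℝ → ℝ) (hg : IntervalIntegrable g volume A B)
    (hbound : ∀ ξ ∈ Set.uIoc A B, |g ξ| ≤ L * Real.exp (K * (c + |ξ - A|)) * d) :
    |∫ ξ in A..B, g ξ| ≤ L / K * Real.exp (K * (c + |B - A|)) * d := by
  set G : ℝ → ℝ := fun ξ => L * Real.exp (K * (c + (ξ - A))) * d with hGdef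
  have hGc : Continuous G := by fun_prop
  have hGint : IntervalIntegrable G volume A B := hGc.intervalIntegrable _ _
  have hb : ∀ᵐ t ∂volume.restrict (Set.uIoc A B), ‖g t‖ ≤ G t := by
    refine ae_restrict_of_forall_mem measurableSet_uIoc fun ξ hξ => ?_
    have h1 := hbound ξ hξ
    rw [Set.uIoc_of_le hAB] at hξ
    rw [abs_of_nonneg (by linarith [hξ.1] : (0:ℝ) ≤ ξ - A)] at h1
    rw [Real.norm_eq_abs]
    exact h1
  have h2 : ‖∫ ξ in A..B, g ξ‖ ≤ |∫ ξ in A..B, G ξ| :=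
    intervalIntegral.norm_integral_le_abs_of_norm_le hb hGint
  have hF : ∀ ξ ∈ Set.uIcc A B, HasDerivAt (fun ξ => L * d / K * Real.exp (K * (c + (ξ - A)))) (G ξ) ξ := by
    intro ξ _
    have h1 : HasDerivAt (fun ξ : ℝ => K * (c + (ξ - A))) K ξ := by
      simpa using (((hasDerivAt_id ξ).sub_const A).const_add c).const_mul K
    have h3 := h1.exp.const_mul (L * d / K)
    refine h3.congr_deriv ?_
    field_simp [hGdef]
    ring
  have h4 : ∫ ξ in A..B, G ξ
      = L * d / K * Real.exp (K * (c + (B - A))) - L * d / K * Real.exp (K * (c + (A - A))) :=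
    intervalIntegral.integral_eq_sub_of_hasDerivAt hF hGint
  rw [Real.norm_eq_abs] at h2
  refine h2.trans ?_
  have e0 := Real.exp_pos (K * (c + (A - A)))
  have h5 : Real.exp (K * (c + (A - A))) ≤ Real.exp (K * (c + (B - A))) :=
    Real.exp_le_exp.2 (by nlinarith)
  have h6 : 0 ≤ L * d / K := by positivity
  rw [h4, abs_of_nonneg (by nlinarith), abs_of_nonneg (by linarith : (0:ℝ) ≤ B - A)]
  have heq : L / K * Real.exp (K * (c + (B - A))) * d
      = L * d / K * Real.exp (K * (c + (B - A))) := by ring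
  linarith [mul_nonneg h6 e0.le, heq.ge, heq.le]

lemma darbouxExpBound (K L d c A B : ℝ) (hK : 0 < K) (hL : 0 ≤ L) (hd : 0 ≤ d)
    (g : ℝ → ℝ) (hg : IntervalIntegrable g volume A B)
    (hbound : ∀ ξ ∈ Set.uIoc A B, |g ξ| ≤ L * Real.exp (K * (c + |ξ - A|)) * d) :
    |∫ ξ in A..B, g ξ| ≤ L / K * Real.exp (K * (c + |B - A|)) * d := by
  rcases le_total A B with hAB | hBA
  · exact darbouxExpBoundLe K L d c A B hK hL hd hAB g hg hbound
  · set G : ℝ → ℝ := fun ξ => L * Real.exp (K * (c + (A - ξ))) * d with hGdef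
    have hGc : Continuous G := by fun_prop
    have hGint : IntervalIntegrable G volume B A := hGc.intervalIntegrable _ _
    have hb : ∀ᵐ t ∂volume.restrict (Set.uIoc B A), ‖g t‖ ≤ G t := by
      refine ae_restrict_of_forall_mem measurableSet_uIoc fun ξ hξ => ?_
      have h1 := hbound ξ (Set.uIoc_comm B A ▸ hξ)
      rw [Set.uIoc_of_le hBA] at hξ
      rw [abs_sub_comm, abs_of_nonneg (by linarith [hξ.2] : (0:ℝ) ≤ A - ξ)] at h1
      rw [Real.norm_eq_abs]
      exact h1
    have h2 : ‖∫ ξ in B..A, g ξ‖ ≤ |∫ ξ in B..A, G ξ| :=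
      intervalIntegral.norm_integral_le_abs_of_norm_le hb hGint
    have hF : ∀ ξ ∈ Set.uIcc B A, HasDerivAt (fun ξ => -(L * d / K) * Real.exp (K * (c + (A - ξ)))) (G ξ) ξ := by
      intro ξ _
      have h1 : HasDerivAt (fun ξ : ℝ => K * (c + (A - ξ))) (-K) ξ := by
        simpa using (((hasDerivAt_id ξ).const_sub A).const_add c).const_mul K
      have h3 := h1.exp.const_mul (-(L * d / K))
      refine h3.congr_deriv ?_
      field_simp [hGdef]
      ring
    have h4 : ∫ ξ in B..A, G ξ
        = -(L * d / K) * Real.exp (K * (c + (A - A))) - -(L * d / K) * Real.exp (K * (c + (A - B))) :=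
      intervalIntegral.integral_eq_sub_of_hasDerivAt hF hGint
    rw [intervalIntegral.integral_symm, abs_neg]
    rw [Real.norm_eq_abs] at h2
    refine h2.trans ?_
    have e0 := Real.exp_pos (K * (c + (A - A)))
    have h5 : Real.exp (K * (c + (A - A))) ≤ Real.exp (K * (c + (A - B))) :=
      Real.exp_le_exp.2 (by nlinarith)
    have h6 : 0 ≤ L * d / K := by positivity
    have hrw : -(L * d / K) * Real.exp (K * (c + (A - A))) - -(L * d / K) * Real.exp (K * (c + (A - B)))
        = L * d / K * Real.exp (K * (c + (A - B))) - L * d / K * Real.exp (K * (c + (A - A))) := by ring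
    rw [h4, hrw, abs_of_nonneg (by nlinarith), abs_of_nonpos (by linarith : B - A ≤ 0)]
    have harg : K * (c + -(B - A)) = K * (c + (A - B)) := by ring
    rw [harg]
    have heq : L / K * Real.exp (K * (c + (A - B))) * d
        = L * d / K * Real.exp (K * (c + (A - B))) := by ring
    linarith [mul_nonneg h6 e0.le, heq.ge, heq.le]

open intervalIntegral MeasureTheory

lemma darbouxValsMem {n N : ℕ} {φ : Fin N → (Fin n → ℝ) → ℝ} {xbar : Fin n → ℝ}
    {a b σ : ℝ} {u : Fin N → (Fin n → ℝ) → ℝ}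
    (hb : 0 < b) (hσa : σ ≤ a)
    (hφosc : ∀ h x, (∑ j, |x j - xbar j| ≤ a) → |φ h x - φ h xbar| ≤ b / (2 * N))
    (hu : memDarbouxX n N φ xbar b σ u)
    {x : Fin n → ℝ} (hx : ∑ j, |x j - xbar j| ≤ σ) :
    ∑ m, |u m x - φ m xbar| ≤ b := by
  have hxa : ∑ j, |x j - xbar j| ≤ a := hx.trans hσa
  have h1 : ∑ m, |u m x - φ m xbar| ≤ ∑ m, (|u m x - φ m x| + |φ m x - φ m xbar|) := by
    refine Finset.sum_le_sum fun m _ => ?_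
    calc |u m x - φ m xbar| = |(u m x - φ m x) + (φ m x - φ m xbar)| := by ring_nf
      _ ≤ _ := abs_add_le _ _
  rw [Finset.sum_add_distrib] at h1
  have h2 : ∑ m : Fin N, |φ m x - φ m xbar| ≤ ∑ m : Fin N, b / (2 * N) :=
    Finset.sum_le_sum fun m _ => hφosc m x hxa
  have h3 : ∑ m : Fin N, (b / (2 * N) : ℝ) = N * (b / (2 * N)) := by
    rw [Finset.sum_const, Finset.card_univ, Fintype.card_fin, nsmul_eq_mul]
  have h4 : (N : ℝ) * (b / (2 * N)) ≤ b / 2 := by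
    rcases Nat.eq_zero_or_pos N with hN | hN
    · simp [hN]; positivity
    · have : (N : ℝ) ≠ 0 := Nat.cast_ne_zero.2 hN.ne'
      rw [show (N : ℝ) * (b / (2 * N)) = b / 2 by field_simp]
  linarith [hu.2 x hx]

lemma darbouxDistProps {n N : ℕ} {φ : Fin N → (Fin n → ℝ) → ℝ} {xbar : Fin n → ℝ}
    {b σ K : ℝ} {u v : Fin N → (Fin n → ℝ) → ℝ}
    (hb : 0 < b) (hK : 0 ≤ K) (hσ : 0 < σ)
    (hu : memDarbouxX n N φ xbar b σ u) (hv : memDarbouxX n N φ xbar b σ v) :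
    0 ≤ darbouxDist n N xbar σ K u v ∧
    ∀ x, (∑ j, |x j - xbar j| ≤ σ) →
      ∑ m, |u m x - v m x| ≤ Real.exp (K * ∑ j, |x j - xbar j|) * darbouxDist n N xbar σ K u v := by
  set S := {x : Fin n → ℝ | ∑ j, |x j - xbar j| ≤ σ} with hS
  have hxbarS : xbar ∈ S := by simp [hS, hσ.le]
  have hsum_nonneg : ∀ x : Fin n → ℝ, (0:ℝ) ≤ ∑ j, |x j - xbar j| :=
    fun x => Finset.sum_nonneg fun j _ => abs_nonneg _
  have hub : ∀ e ∈ ((fun x : Fin n → ℝ =>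
      Real.exp (-(K * ∑ j, |x j - xbar j|)) * ∑ h, |u h x - v h x|) '' S), e ≤ b := by
    rintro e ⟨x, hx, rfl⟩
    have h1 : ∑ h, |u h x - v h x| ≤ b := by
      have : ∀ h : Fin N, |u h x - v h x| ≤ |u h x - φ h x| + |v h x - φ h x| := fun h => by
        rw [abs_sub_comm (v h x)]
        calc |u h x - v h x| = |(u h x - φ h x) + (φ h x - v h x)| := by ring_nf
          _ ≤ _ := abs_add_le _ _
      calc ∑ h, |u h x - v h x| ≤ ∑ h, (|u h x - φ h x| + |v h x - φ h x|) :=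
            Finset.sum_le_sum fun h _ => this h
        _ = (∑ h, |u h x - φ h x|) + ∑ h, |v h x - φ h x| := Finset.sum_add_distrib
        _ ≤ b / 2 + b / 2 := add_le_add (hu.2 x hx) (hv.2 x hx)
        _ = b := by ring
    have h2 : Real.exp (-(K * ∑ j, |x j - xbar j|)) ≤ 1 :=
      Real.exp_le_one_iff.2 (by nlinarith [hsum_nonneg x])
    calc Real.exp (-(K * ∑ j, |x j - xbar j|)) * ∑ h, |u h x - v h x|
        ≤ 1 * ∑ h, |u h x - v h x| := by
          apply mul_le_mul_of_nonneg_right h2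
          exact Finset.sum_nonneg fun h _ => abs_nonneg _
      _ = ∑ h, |u h x - v h x| := one_mul _
      _ ≤ b := h1
  have hbdd : BddAbove ((fun x : Fin n → ℝ =>
      Real.exp (-(K * ∑ j, |x j - xbar j|)) * ∑ h, |u h x - v h x|) '' S) := ⟨b, hub⟩
  constructor
  · refine le_trans ?_ (le_csSup hbdd (Set.mem_image_of_mem _ hxbarS))
    positivity
  · intro x hx
    have h := le_csSup hbdd (Set.mem_image_of_mem _ (by exact hx : x ∈ S))
    have h2 := mul_le_mul_of_nonneg_left h (Real.exp_pos (K * ∑ j, |x j - xbar j|)).le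
    calc ∑ m, |u m x - v m x|
        = Real.exp (K * ∑ j, |x j - xbar j|) *
           (Real.exp (-(K * ∑ j, |x j - xbar j|)) * ∑ m, |u m x - v m x|) := by
          rw [← mul_assoc, ← Real.exp_add]
          simp
      _ ≤ _ := h2
lemma darbouxUpdateCont {n : ℕ} (x : Fin n → ℝ) (i : Fin n) :
    Continuous (fun ξ : ℝ => Function.update x i ξ) := by
  refine continuous_pi fun j => ?_
  simp only [Function.update_apply]
  by_cases hj : j = i <;> simp [hj] <;> fun_prop

lemma darbouxIntegrandCont {n N : ℕ} {idx : Fin N → Fin n}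
    {f : Fin N → (Fin n → ℝ) → (Fin N → ℝ) → ℝ}
    {φ : Fin N → (Fin n → ℝ) → ℝ} {xbar : Fin n → ℝ}
    {a b σ : ℝ} {u : Fin N → (Fin n → ℝ) → ℝ}
    (hb : 0 < b) (hσa : σ ≤ a)
    (hfc : ∀ h, ContinuousOn (fun p : (Fin n → ℝ) × (Fin N → ℝ) => f h p.1 p.2)
      ({x : Fin n → ℝ | ∑ j, |x j - xbar j| ≤ a} ×ˢ
       {v : Fin N → ℝ | ∑ m, |v m - φ m xbar| ≤ b}))
    (hφosc : ∀ h x, (∑ j, |x j - xbar j| ≤ a) → |φ h x - φ h xbar| ≤ b / (2 * N))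
    (hu : memDarbouxX n N φ xbar b σ u)
    {x : Fin n → ℝ} (hx : ∑ j, |x j - xbar j| ≤ σ) (h : Fin N) :
    ContinuousOn (fun ξ : ℝ =>
        f h (Function.update x (idx h) ξ) (fun m => u m (Function.update x (idx h) ξ)))
      (Set.uIcc (xbar (idx h)) (x (idx h))) := by
  set i := idx h
  set e : ℝ → (Fin n → ℝ) := fun ξ => Function.update x i ξ with he
  have hec : Continuous e := darbouxUpdateCont x i
  have hmap : Set.MapsTo e (Set.uIcc (xbar i) (x i))
      {y : Fin n → ℝ | ∑ j, |y j - xbar j| ≤ σ} := fun ξ hξ => darbouxUpdateMem hx hξ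
  have g1 : ContinuousOn (fun ξ : ℝ => fun m => u m (e ξ)) (Set.uIcc (xbar i) (x i)) :=
    ContinuousOn.comp hu.1 hec.continuousOn hmap
  have pair : ContinuousOn (fun ξ : ℝ => (e ξ, fun m => u m (e ξ)))
      (Set.uIcc (xbar i) (x i)) := hec.continuousOn.prodMk g1
  refine ContinuousOn.comp (hfc h) pair fun ξ hξ => ?_
  constructor
  · exact le_trans (darbouxUpdateMem hx hξ) hσa
  · exact darbouxValsMem hb hσa hφosc hu (darbouxUpdateMem hx hξ)

lemma darbouxIntegrandIntble {n N : ℕ} {idx : Fin N → Fin n}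
    {f : Fin N → (Fin n → ℝ) → (Fin N → ℝ) → ℝ}
    {φ : Fin N → (Fin n → ℝ) → ℝ} {xbar : Fin n → ℝ}
    {a b σ : ℝ} {u : Fin N → (Fin n → ℝ) → ℝ}
    (hb : 0 < b) (hσa : σ ≤ a)
    (hfc : ∀ h, ContinuousOn (fun p : (Fin n → ℝ) × (Fin N → ℝ) => f h p.1 p.2)
      ({x : Fin n → ℝ | ∑ j, |x j - xbar j| ≤ a} ×ˢ
       {v : Fin N → ℝ | ∑ m, |v m - φ m xbar| ≤ b}))
    (hφosc : ∀ h x, (∑ j, |x j - xbar j| ≤ a) → |φ h x - φ h xbar| ≤ b / (2 * N))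
    (hu : memDarbouxX n N φ xbar b σ u)
    {x : Fin n → ℝ} (hx : ∑ j, |x j - xbar j| ≤ σ) (h : Fin N) :
    IntervalIntegrable (fun ξ : ℝ =>
        f h (Function.update x (idx h) ξ) (fun m => u m (Function.update x (idx h) ξ)))
      volume (xbar (idx h)) (x (idx h)) :=
  (darbouxIntegrandCont hb hσa hfc hφosc hu hx h).intervalIntegrable
lemma darbouxContraction {n N : ℕ} {idx : Fin N → Fin n}
    {f : Fin N → (Fin n → ℝ) → (Fin N → ℝ) → ℝ}
    {φ : Fin N → (Fin n → ℝ) → ℝ} {xbar : Fin n → ℝ}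
    {a b L σ : ℝ}
    (hb : 0 < b) (hL : 0 ≤ L)
    (hfc : ∀ h, ContinuousOn (fun p : (Fin n → ℝ) × (Fin N → ℝ) => f h p.1 p.2)
      ({x : Fin n → ℝ | ∑ j, |x j - xbar j| ≤ a} ×ˢ
       {v : Fin N → ℝ | ∑ m, |v m - φ m xbar| ≤ b}))
    (hfL : ∀ h x u v, (∑ j, |x j - xbar j| ≤ a) → (∑ m, |u m - φ m xbar| ≤ b) →
      (∑ m, |v m - φ m xbar| ≤ b) → |f h x u - f h x v| ≤ L * ∑ m, |u m - v m|)
    (hφosc : ∀ h x, (∑ j, |x j - xbar j| ≤ a) → |φ h x - φ h xbar| ≤ b / (2 * N))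
    (hσ : 0 < σ) (hσa : σ ≤ a)
    (u v : Fin N → (Fin n → ℝ) → ℝ)
    (hu : memDarbouxX n N φ xbar b σ u) (hv : memDarbouxX n N φ xbar b σ v) :
    darbouxDist n N xbar σ (2 * L * N)
        (darbouxPhi n N idx f φ xbar u) (darbouxPhi n N idx f φ xbar v)
      ≤ (1 / 2) * darbouxDist n N xbar σ (2 * L * N) u v := by
  set K := 2 * L * N with hKdef
  have hK0 : 0 ≤ K := by positivity
  obtain ⟨hd0, hkey⟩ := darbouxDistProps (K := K) hb hK0 hσ hu hv
  set d := darbouxDist n N xbar σ K u v with hd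
  have hRHS : 0 ≤ (1 / 2) * d := by linarith
  refine Real.sSup_le ?_ hRHS
  rintro e ⟨x, hx, rfl⟩
  simp only []
  have hx' : ∑ j, |x j - xbar j| ≤ σ := hx
  set s := ∑ j, |x j - xbar j| with hs
  have hs0 : 0 ≤ s := Finset.sum_nonneg fun j _ => abs_nonneg _
  -- key pointwise sum estimate
  have hsum : ∑ h, |darbouxPhi n N idx f φ xbar u h x - darbouxPhi n N idx f φ xbar v h x|
      ≤ (1 / 2) * Real.exp (K * s) * d := by
    rcases Nat.eq_zero_or_pos N with hN | hN
    · subst hN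
      simp only [Finset.univ_eq_empty, Finset.sum_empty]
      positivity
    rcases hL.eq_or_lt with hL0 | hLpos
    · -- L = 0 : the integrands coincide
      have : ∀ h, darbouxPhi n N idx f φ xbar u h x = darbouxPhi n N idx f φ xbar v h x := by
        intro h
        unfold darbouxPhi
        congr 1
        refine intervalIntegral.integral_congr fun ξ hξ => ?_
        have hmem := darbouxUpdateMem hx' hξ
        have h1 := hfL h (Function.update x (idx h) ξ)
          (fun m => u m (Function.update x (idx h) ξ))
          (fun m => v m (Function.update x (idx h) ξ))
          (hmem.trans hσa) (darbouxValsMem hb hσa hφosc hu hmem)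
          (darbouxValsMem hb hσa hφosc hv hmem)
        rw [← hL0, zero_mul] at h1
        have := abs_nonneg (f h (Function.update x (idx h) ξ)
          (fun m => u m (Function.update x (idx h) ξ)) -
          f h (Function.update x (idx h) ξ) (fun m => v m (Function.update x (idx h) ξ)))
        exact sub_eq_zero.1 (abs_eq_zero.1 (le_antisymm h1 this))
      simp only [this, sub_self, abs_zero, Finset.sum_const, smul_zero]
      positivity
    · -- main case : K > 0
      have hKpos : 0 < K := by
        have : (0:ℝ) < N := by exact_mod_cast hN
        positivity
      have hperh : ∀ h, |darbouxPhi n N idx f φ xbar u h x - darbouxPhi n N idx f φ xbar v h x|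
          ≤ L / K * Real.exp (K * s) * d := by
        intro h
        set i := idx h with hi
        set A := xbar i with hA
        set B := x i with hB
        set c := ∑ j ∈ Finset.univ.erase i, |x j - xbar j| with hc
        have hc0 : 0 ≤ c := Finset.sum_nonneg fun j _ => abs_nonneg _
        set gu : ℝ → ℝ := fun ξ =>
          f h (Function.update x i ξ) (fun m => u m (Function.update x i ξ)) with hgu
        set gv : ℝ → ℝ := fun ξ =>
          f h (Function.update x i ξ) (fun m => v m (Function.update x i ξ)) with hgv
        have hguI : IntervalIntegrable gu volume A B :=
          darbouxIntegrandIntble hb hσa hfc hφosc hu hx' h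
        have hgvI : IntervalIntegrable gv volume A B :=
          darbouxIntegrandIntble hb hσa hfc hφosc hv hx' h
        have hdiff : darbouxPhi n N idx f φ xbar u h x - darbouxPhi n N idx f φ xbar v h x
            = ∫ ξ in A..B, (gu ξ - gv ξ) := by
          unfold darbouxPhi
          rw [intervalIntegral.integral_sub hguI hgvI]
          ring
        rw [hdiff]
        have hbound : ∀ ξ ∈ Set.uIoc A B, |gu ξ - gv ξ|
            ≤ L * Real.exp (K * (c + |ξ - A|)) * d := by
          intro ξ hξ
          have hξ' : ξ ∈ Set.uIcc A B := Set.uIoc_subset_uIcc hξ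
          have hmem := darbouxUpdateMem hx' hξ'
          have h1 := hfL h (Function.update x i ξ)
            (fun m => u m (Function.update x i ξ))
            (fun m => v m (Function.update x i ξ))
            (hmem.trans hσa) (darbouxValsMem hb hσa hφosc hu hmem)
            (darbouxValsMem hb hσa hφosc hv hmem)
          have h2 := hkey _ hmem
          rw [darbouxSumUpdate x xbar i ξ] at h2
          calc |gu ξ - gv ξ| ≤ L * ∑ m, |u m (Function.update x i ξ) - v m (Function.update x i ξ)| := h1
            _ ≤ L * (Real.exp (K * (c + |ξ - A|)) * d) :=
                mul_le_mul_of_nonneg_left h2 hL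
            _ = L * Real.exp (K * (c + |ξ - A|)) * d := by ring
        have := darbouxExpBound K L d c A B hKpos hL hd0
          (fun ξ => gu ξ - gv ξ) (hguI.sub hgvI) hbound
        refine this.trans ?_
        have hcs : c + |B - A| = s := by
          rw [hs, darbouxSumSplit x xbar i, hc]
        rw [hcs]
      calc ∑ h, |darbouxPhi n N idx f φ xbar u h x - darbouxPhi n N idx f φ xbar v h x|
          ≤ ∑ _h : Fin N, L / K * Real.exp (K * s) * d :=
            Finset.sum_le_sum fun h _ => hperh h
        _ = N * (L / K * Real.exp (K * s) * d) := by
            rw [Finset.sum_const, Finset.card_univ, Fintype.card_fin, nsmul_eq_mul]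
        _ = (1 / 2) * Real.exp (K * s) * d := by
            have hN' : (N : ℝ) ≠ 0 := by
              have : (0:ℝ) < N := by exact_mod_cast hN
              exact this.ne'
            rw [hKdef]
            field_simp
  calc Real.exp (-(K * s)) * ∑ h, |darbouxPhi n N idx f φ xbar u h x - darbouxPhi n N idx f φ xbar v h x|
      ≤ Real.exp (-(K * s)) * ((1 / 2) * Real.exp (K * s) * d) :=
        mul_le_mul_of_nonneg_left hsum (Real.exp_pos _).le
    _ = (1 / 2) * d := by
        rw [show Real.exp (-(K * s)) * ((1 / 2) * Real.exp (K * s) * d)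
            = (Real.exp (-(K * s)) * Real.exp (K * s)) * ((1/2) * d) by ring,
          ← Real.exp_add]
        simp
lemma darbouxPhiBound {n N : ℕ} {idx : Fin N → Fin n}
    {f : Fin N → (Fin n → ℝ) → (Fin N → ℝ) → ℝ}
    {φ : Fin N → (Fin n → ℝ) → ℝ} {xbar : Fin n → ℝ}
    {a b M σ : ℝ}
    (ha : 0 < a) (hb : 0 < b) (hσ : 0 < σ) (hσa : σ ≤ a)
    (hφosc : ∀ h x, (∑ j, |x j - xbar j| ≤ a) → |φ h x - φ h xbar| ≤ b / (2 * N))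
    (hMb : ∀ h x u, (∑ j, |x j - xbar j| ≤ a) → (∑ m, |u m - φ m xbar| ≤ b) →
      |f h x u| ≤ M)
    (hσM : M * N * σ ≤ b / 2)
    {u : Fin N → (Fin n → ℝ) → ℝ} (hu : memDarbouxX n N φ xbar b σ u)
    {x : Fin n → ℝ} (hx : ∑ j, |x j - xbar j| ≤ σ) :
    ∑ h, |darbouxPhi n N idx f φ xbar u h x - φ h x| ≤ b / 2 := by
  have hM0 : ∀ _h : Fin N, 0 ≤ M := by
    intro h
    have h1 : ∑ j, |xbar j - xbar j| ≤ a := by simpa using ha.le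
    have h2 : ∑ m : Fin N, |φ m xbar - φ m xbar| ≤ b := by simpa using hb.le
    exact le_trans (abs_nonneg _) (hMb h xbar (fun m => φ m xbar) h1 h2)
  have hperh : ∀ h : Fin N, |darbouxPhi n N idx f φ xbar u h x - φ h x| ≤ M * σ := by
    intro h
    have heq : darbouxPhi n N idx f φ xbar u h x - φ h x
        = ∫ ξ in (xbar (idx h))..(x (idx h)),
            f h (Function.update x (idx h) ξ) (fun m => u m (Function.update x (idx h) ξ)) := by
      unfold darbouxPhi; ring
    rw [heq]
    have hbd : ∀ ξ ∈ Set.uIoc (xbar (idx h)) (x (idx h)),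
        ‖f h (Function.update x (idx h) ξ) (fun m => u m (Function.update x (idx h) ξ))‖ ≤ M := by
      intro ξ hξ
      have hmem := darbouxUpdateMem hx (Set.uIoc_subset_uIcc hξ)
      exact hMb h _ _ (hmem.trans hσa) (darbouxValsMem hb hσa hφosc hu hmem)
    have h1 := intervalIntegral.norm_integral_le_of_norm_le_const hbd
    rw [Real.norm_eq_abs] at h1
    refine h1.trans ?_
    have h2 : |x (idx h) - xbar (idx h)| ≤ σ := by
      refine le_trans ?_ hx
      exact Finset.single_le_sum (f := fun j => |x j - xbar j|)
        (fun j _ => abs_nonneg _) (Finset.mem_univ (idx h))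
    exact mul_le_mul_of_nonneg_left h2 (hM0 h)
  calc ∑ h, |darbouxPhi n N idx f φ xbar u h x - φ h x| ≤ ∑ _h : Fin N, M * σ :=
        Finset.sum_le_sum fun h _ => hperh h
    _ = N * (M * σ) := by
        rw [Finset.sum_const, Finset.card_univ, Fintype.card_fin, nsmul_eq_mul]
    _ = M * N * σ := by ring
    _ ≤ b / 2 := hσM
lemma darbouxUpdateCont2 {n : ℕ} (i : Fin n) :
    Continuous (fun p : (Fin n → ℝ) × ℝ => Function.update p.1 i p.2) := by
  refine continuous_pi fun j => ?_
  simp only [Function.update_apply]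
  by_cases hj : j = i <;> simp [hj] <;> fun_prop

lemma darbouxPhiCont {n N : ℕ} {idx : Fin N → Fin n}
    {f : Fin N → (Fin n → ℝ) → (Fin N → ℝ) → ℝ}
    {φ : Fin N → (Fin n → ℝ) → ℝ} {xbar : Fin n → ℝ}
    {a b σ : ℝ}
    (hb : 0 < b) (hσ : 0 < σ) (hσa : σ ≤ a)
    (hfc : ∀ h, ContinuousOn (fun p : (Fin n → ℝ) × (Fin N → ℝ) => f h p.1 p.2)
      ({x : Fin n → ℝ | ∑ j, |x j - xbar j| ≤ a} ×ˢ
       {v : Fin N → ℝ | ∑ m, |v m - φ m xbar| ≤ b}))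
    (hφc : ∀ h, ContinuousOn (φ h) {x : Fin n → ℝ | ∑ j, |x j - xbar j| ≤ a})
    (hφosc : ∀ h x, (∑ j, |x j - xbar j| ≤ a) → |φ h x - φ h xbar| ≤ b / (2 * N))
    {u : Fin N → (Fin n → ℝ) → ℝ} (hu : memDarbouxX n N φ xbar b σ u) :
    ContinuousOn (fun x h => darbouxPhi n N idx f φ xbar u h x)
      {x : Fin n → ℝ | ∑ j, |x j - xbar j| ≤ σ} := by
  set S := {x : Fin n → ℝ | ∑ j, |x j - xbar j| ≤ σ} with hSdef
  have hSsub : S ⊆ {x : Fin n → ℝ | ∑ j, |x j - xbar j| ≤ a} := fun x hx => le_trans hx hσa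
  have hSclosed : IsClosed S := by
    refine isClosed_le ?_ continuous_const
    exact continuous_finset_sum _ fun j _ => ((continuous_apply j).sub continuous_const).abs
  -- Tietze extension of u
  have hur : Continuous (S.restrict (fun x (h : Fin N) => u h x)) := hu.1.restrict
  obtain ⟨U, hU⟩ := ContinuousMap.exists_restrict_eq (Y := Fin N → ℝ) hSclosed
    ⟨S.restrict (fun x (h : Fin N) => u h x), hur⟩
  have hUeq : ∀ (y : Fin n → ℝ) (hy : y ∈ S), U y = fun h => u h y := by
    intro y hy
    have := ContinuousMap.congr_fun hU ⟨y, hy⟩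
    exact this
  rw [continuousOn_pi]
  intro h
  -- Tietze extension of f h
  set P := ({x : Fin n → ℝ | ∑ j, |x j - xbar j| ≤ a} ×ˢ
       {v : Fin N → ℝ | ∑ m, |v m - φ m xbar| ≤ b}) with hPdef
  have hPclosed : IsClosed P := by
    refine IsClosed.prod ?_ ?_
    · refine isClosed_le ?_ continuous_const
      exact continuous_finset_sum _ fun j _ => ((continuous_apply j).sub continuous_const).abs
    · refine isClosed_le ?_ continuous_const
      exact continuous_finset_sum _ fun m _ => ((continuous_apply m).sub continuous_const).abs
  obtain ⟨F, hF⟩ := ContinuousMap.exists_restrict_eq (Y := ℝ) hPclosed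
    ⟨P.restrict (fun p : (Fin n → ℝ) × (Fin N → ℝ) => f h p.1 p.2), (hfc h).restrict⟩
  have hFeq : ∀ (p : (Fin n → ℝ) × (Fin N → ℝ)) (hp : p ∈ P), F p = f h p.1 p.2 := by
    intro p hp
    have := ContinuousMap.congr_fun hF ⟨p, hp⟩
    exact this
  set i := idx h with hi
  -- globally continuous parametric integral
  set g : (Fin n → ℝ) → ℝ → ℝ := fun x ξ =>
    F (Function.update x i ξ, U (Function.update x i ξ)) with hgdef
  have hgc : Continuous (Function.uncurry g) := by
    have h1 : Continuous (fun p : (Fin n → ℝ) × ℝ => Function.update p.1 i p.2) :=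
      darbouxUpdateCont2 i
    exact F.continuous.comp (h1.prodMk (U.continuous.comp h1))
  have hcont : Continuous (fun x : Fin n → ℝ => ∫ ξ in (xbar i)..(x i), g x ξ) :=
    intervalIntegral.continuous_parametric_intervalIntegral_of_continuous hgc (continuous_apply i)
  -- the two integrals agree on S
  have heq : Set.EqOn (fun x => darbouxPhi n N idx f φ xbar u h x)
      (fun x => φ h x + ∫ ξ in (xbar i)..(x i), g x ξ) S := by
    intro x hx
    simp only [darbouxPhi]
    congr 1
    refine intervalIntegral.integral_congr fun ξ hξ => ?_
    have hmem : Function.update x i ξ ∈ S := darbouxUpdateMem hx hξ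
    have hvals : (fun m => u m (Function.update x i ξ)) ∈
        {v : Fin N → ℝ | ∑ m, |v m - φ m xbar| ≤ b} :=
      darbouxValsMem hb hσa hφosc hu hmem
    have hp : (Function.update x i ξ, (fun m => u m (Function.update x i ξ))) ∈ P :=
      ⟨hSsub hmem, hvals⟩
    rw [hgdef]
    simp only []
    rw [hUeq _ hmem, hFeq _ hp]
  refine ContinuousOn.congr ?_ heq
  exact ((hφc h).mono hSsub).add hcont.continuousOn
lemma darbouxDistCongr {n N : ℕ} {xbar : Fin n → ℝ} {σ K : ℝ}
    {u u' v v' : Fin N → (Fin n → ℝ) → ℝ}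
    (hu : ∀ x : Fin n → ℝ, (∑ j, |x j - xbar j| ≤ σ) → ∀ h, u h x = u' h x)
    (hv : ∀ x : Fin n → ℝ, (∑ j, |x j - xbar j| ≤ σ) → ∀ h, v h x = v' h x) :
    darbouxDist n N xbar σ K u v = darbouxDist n N xbar σ K u' v' := by
  unfold darbouxDist
  congr 1
  refine Set.image_congr fun x hx => ?_
  congr 1
  exact Finset.sum_congr rfl fun h _ => by rw [hu x hx h, hv x hx h]

/-- With the weighted metric `d` (weight `e^{-K|x-xbar|₁}`, `K = 2LN`), the map `Φ`
is a strict `1/2`-contraction on `X`; hence it has a unique fixed point (unique up to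
equality on `B_σ(xbar)`). -/
theorem darboux_first_picard_contraction (n N : ℕ) (idx : Fin N → Fin n)
    (f : Fin N → (Fin n → ℝ) → (Fin N → ℝ) → ℝ)
    (φ : Fin N → (Fin n → ℝ) → ℝ)
    (xbar : Fin n → ℝ) (a b L M σ : ℝ)
    (ha : 0 < a) (hb : 0 < b) (hL : 0 ≤ L)
    (hφind : ∀ h x t, φ h (Function.update x (idx h) t) = φ h x)
    (hfc : ∀ h, ContinuousOn (fun p : (Fin n → ℝ) × (Fin N → ℝ) => f h p.1 p.2)
      ({x : Fin n → ℝ | ∑ j, |x j - xbar j| ≤ a} ×ˢ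
       {v : Fin N → ℝ | ∑ m, |v m - φ m xbar| ≤ b}))
    (hfL : ∀ h x u v, (∑ j, |x j - xbar j| ≤ a) → (∑ m, |u m - φ m xbar| ≤ b) →
      (∑ m, |v m - φ m xbar| ≤ b) → |f h x u - f h x v| ≤ L * ∑ m, |u m - v m|)
    (hφc : ∀ h, ContinuousOn (φ h) {x : Fin n → ℝ | ∑ j, |x j - xbar j| ≤ a})
    (hφosc : ∀ h x, (∑ j, |x j - xbar j| ≤ a) → |φ h x - φ h xbar| ≤ b / (2 * N))
    (hMb : ∀ h x u, (∑ j, |x j - xbar j| ≤ a) → (∑ m, |u m - φ m xbar| ≤ b) →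
      |f h x u| ≤ M)
    (hσ : 0 < σ) (hσa : σ ≤ a) (hσM : M * N * σ ≤ b / 2) :
    (∀ u v : Fin N → (Fin n → ℝ) → ℝ,
      memDarbouxX n N φ xbar b σ u → memDarbouxX n N φ xbar b σ v →
      darbouxDist n N xbar σ (2 * L * N)
          (darbouxPhi n N idx f φ xbar u) (darbouxPhi n N idx f φ xbar v)
        ≤ (1 / 2) * darbouxDist n N xbar σ (2 * L * N) u v) ∧
    (∃ u : Fin N → (Fin n → ℝ) → ℝ, memDarbouxX n N φ xbar b σ u ∧
      ∀ x : Fin n → ℝ, (∑ j, |x j - xbar j| ≤ σ) → ∀ h,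
        darbouxPhi n N idx f φ xbar u h x = u h x) ∧
    (∀ u v : Fin N → (Fin n → ℝ) → ℝ,
      memDarbouxX n N φ xbar b σ u → memDarbouxX n N φ xbar b σ v →
      (∀ x : Fin n → ℝ, (∑ j, |x j - xbar j| ≤ σ) → ∀ h,
        darbouxPhi n N idx f φ xbar u h x = u h x) →
      (∀ x : Fin n → ℝ, (∑ j, |x j - xbar j| ≤ σ) → ∀ h,
        darbouxPhi n N idx f φ xbar v h x = v h x) →
      ∀ x : Fin n → ℝ, (∑ j, |x j - xbar j| ≤ σ) → ∀ h, u h x = v h x) := by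
  have part1 : ∀ u v : Fin N → (Fin n → ℝ) → ℝ,
      memDarbouxX n N φ xbar b σ u → memDarbouxX n N φ xbar b σ v →
      darbouxDist n N xbar σ (2 * L * N)
          (darbouxPhi n N idx f φ xbar u) (darbouxPhi n N idx f φ xbar v)
        ≤ (1 / 2) * darbouxDist n N xbar σ (2 * L * N) u v :=
    fun u v hu hv => darbouxContraction hb hL hfc hfL hφosc hσ hσa u v hu hv
  refine ⟨part1, ?_, ?_⟩
  · -- existence of a fixed point
    set S := {x : Fin n → ℝ | ∑ j, |x j - xbar j| ≤ σ} with hSdef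
    have hSclosed : IsClosed S := by
      refine isClosed_le ?_ continuous_const
      exact continuous_finset_sum _ fun j _ => ((continuous_apply j).sub continuous_const).abs
    have hSbounded : Bornology.IsBounded S := by
      refine (Metric.isBounded_closedBall (x := xbar) (r := σ)).subset ?_
      intro x hx
      rw [Metric.mem_closedBall]
      refine (dist_pi_le_iff hσ.le).2 fun j => ?_
      rw [Real.dist_eq]
      exact le_trans (Finset.single_le_sum (f := fun j => |x j - xbar j|)
        (fun j _ => abs_nonneg _) (Finset.mem_univ j)) hx
    have hScompact : IsCompact S := Metric.isCompact_of_isClosed_isBounded hSclosed hSbounded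
    haveI : CompactSpace ↥S := isCompact_iff_compactSpace.mp hScompact
    have hxbarS : xbar ∈ S := by
      have : ∑ j, |xbar j - xbar j| ≤ σ := by simpa using hσ.le
      exact this
    haveI : Nonempty ↥S := ⟨⟨xbar, hxbarS⟩⟩
    set K := 2 * L * (N : ℝ) with hK
    have hK0 : 0 ≤ K := by positivity
    set Xset : Set C(↥S, Fin N → ℝ) :=
      {w | ∀ x : ↥S, ∑ h, |w x h - φ h ↑x| ≤ b / 2} with hXset
    have hXclosed : IsClosed Xset := by
      have hrw : Xset = ⋂ x : ↥S, {w : C(↥S, Fin N → ℝ) | ∑ h, |w x h - φ h ↑x| ≤ b / 2} := by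
        ext w; simp [hXset, Set.mem_iInter]
      rw [hrw]
      refine isClosed_iInter fun x => isClosed_le ?_ continuous_const
      refine continuous_finset_sum _ fun h _ => ?_
      exact (((continuous_apply h).comp (continuous_eval_const (F := C(↥S, Fin N → ℝ)) x)).sub
        continuous_const).abs
    haveI : CompleteSpace ↥Xset := hXclosed.completeSpace_coe
    have hφScont : ∀ h : Fin N, ContinuousOn (φ h) S :=
      fun h => (hφc h).mono (fun x hx => le_trans hx hσa)
    have hw0mem : (⟨fun x => fun h => φ h ↑x, continuous_pi fun h => (hφScont h).restrict⟩ :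
        C(↥S, Fin N → ℝ)) ∈ Xset := by
      intro x
      simpa using (by positivity : (0:ℝ) ≤ b / 2)
    haveI : Nonempty ↥Xset := ⟨⟨_, hw0mem⟩⟩
    -- the extension operator
    obtain ⟨ee, heeDef⟩ : ∃ ee : ↥Xset → (Fin N → (Fin n → ℝ) → ℝ),
        ∀ z h x, ee z h x = if hx : x ∈ S then z.1 ⟨x, hx⟩ h else φ h x := ⟨_, fun z h x => rfl⟩
    have heeVal : ∀ (z : ↥Xset) (x : Fin n → ℝ) (hx : x ∈ S) (h : Fin N),
        ee z h x = z.1 ⟨x, hx⟩ h := by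
      intro z x hx h
      rw [heeDef]
      exact dif_pos hx
    have heeVal' : ∀ (z : ↥Xset) (x : ↥S) (h : Fin N), ee z h ↑x = z.1 x h := by
      intro z x h
      rw [heeVal z ↑x x.2 h]
    have heeMem : ∀ z : ↥Xset, memDarbouxX n N φ xbar b σ (ee z) := by
      intro z
      constructor
      · rw [continuousOn_iff_continuous_restrict]
        have hre : S.restrict (fun x (h : Fin N) => ee z h x) = fun x : ↥S => z.1 x := by
          funext x h
          exact heeVal' z x h
        change Continuous (S.restrict fun x (h : Fin N) => ee z h x)
        rw [hre]
        exact z.1.continuous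
      · intro x hx
        have hsum : ∑ h, |ee z h x - φ h x| = ∑ h, |z.1 ⟨x, hx⟩ h - φ h x| :=
          Finset.sum_congr rfl fun h _ => by rw [heeVal z x hx h]
        rw [hsum]
        exact z.2 ⟨x, hx⟩
    -- the Picard map on Xset
    have Tcont : ∀ z : ↥Xset,
        Continuous (fun x : ↥S => fun h => darbouxPhi n N idx f φ xbar (ee z) h ↑x) :=
      fun z => (darbouxPhiCont hb hσ hσa hfc hφc hφosc (heeMem z)).restrict
    have Tmem : ∀ z : ↥Xset, (⟨_, Tcont z⟩ : C(↥S, Fin N → ℝ)) ∈ Xset :=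
      fun z x => darbouxPhiBound ha hb hσ hσa hφosc hMb hσM (heeMem z) x.2
    obtain ⟨T, hTdef⟩ : ∃ T : ↥Xset → ↥Xset, ∀ z, T z = ⟨⟨_, Tcont z⟩, Tmem z⟩ :=
      ⟨_, fun z => rfl⟩
    have hTval : ∀ (z : ↥Xset) (x : Fin n → ℝ) (hx : x ∈ S) (h : Fin N),
        (T z).1 ⟨x, hx⟩ h = darbouxPhi n N idx f φ xbar (ee z) h x := by
      intro z x hx h
      rw [hTdef]
      rfl
    have heeT : ∀ (z : ↥Xset) (x : Fin n → ℝ), x ∈ S → ∀ (h : Fin N),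
        ee (T z) h x = darbouxPhi n N idx f φ xbar (ee z) h x := by
      intro z x hx h
      rw [heeVal (T z) x hx h, hTval z x hx h]
    have hstep : ∀ z₁ z₂ : ↥Xset,
        darbouxDist n N xbar σ K (ee (T z₁)) (ee (T z₂))
          ≤ (1 / 2) * darbouxDist n N xbar σ K (ee z₁) (ee z₂) := by
      intro z₁ z₂
      rw [darbouxDistCongr (heeT z₁) (heeT z₂)]
      exact darbouxContraction hb hL hfc hfL hφosc hσ hσa _ _ (heeMem z₁) (heeMem z₂)
    have hiter : ∀ (k : ℕ) (z₁ z₂ : ↥Xset),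
        darbouxDist n N xbar σ K (ee (T^[k] z₁)) (ee (T^[k] z₂))
          ≤ (1 / 2) ^ k * darbouxDist n N xbar σ K (ee z₁) (ee z₂) := by
      intro k
      induction k with
      | zero => intro z₁ z₂; simp
      | succ k ih =>
        intro z₁ z₂
        rw [Function.iterate_succ_apply', Function.iterate_succ_apply']
        refine le_trans (hstep _ _) ?_
        have h1 := mul_le_mul_of_nonneg_left (ih z₁ z₂) (by norm_num : (0:ℝ) ≤ 1 / 2)
        refine h1.trans_eq ?_
        ring
    have hcomp1 : ∀ z₁ z₂ : ↥Xset,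
        darbouxDist n N xbar σ K (ee z₁) (ee z₂) ≤ N * dist z₁ z₂ := by
      intro z₁ z₂
      have hNd : 0 ≤ (N : ℝ) * dist z₁ z₂ := mul_nonneg (Nat.cast_nonneg _) dist_nonneg
      refine Real.sSup_le ?_ hNd
      rintro e ⟨x, hx, rfl⟩
      have h1 : ∀ h : Fin N, |ee z₁ h x - ee z₂ h x| ≤ dist z₁ z₂ := by
        intro h
        rw [heeVal z₁ x hx h, heeVal z₂ x hx h, Subtype.dist_eq]
        have h2 := dist_le_pi_dist (z₁.1 ⟨x, hx⟩) (z₂.1 ⟨x, hx⟩) h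
        rw [Real.dist_eq] at h2
        exact le_trans h2 (ContinuousMap.dist_apply_le_dist _)
      have hsumnn : 0 ≤ ∑ h, |ee z₁ h x - ee z₂ h x| :=
        Finset.sum_nonneg fun h _ => abs_nonneg _
      have h4 : ∑ h, |ee z₁ h x - ee z₂ h x| ≤ N * dist z₁ z₂ := by
        calc ∑ h, |ee z₁ h x - ee z₂ h x| ≤ ∑ _h : Fin N, dist z₁ z₂ :=
              Finset.sum_le_sum fun h _ => h1 h
          _ = N * dist z₁ z₂ := by
              rw [Finset.sum_const, Finset.card_univ, Fintype.card_fin, nsmul_eq_mul]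
      have hexp : Real.exp (-(K * ∑ j, |x j - xbar j|)) ≤ 1 :=
        Real.exp_le_one_iff.2 (neg_nonpos.2
          (mul_nonneg hK0 (Finset.sum_nonneg fun j _ => abs_nonneg _)))
      calc Real.exp (-(K * ∑ j, |x j - xbar j|)) * ∑ h, |ee z₁ h x - ee z₂ h x|
          ≤ 1 * ∑ h, |ee z₁ h x - ee z₂ h x| := mul_le_mul_of_nonneg_right hexp hsumnn
        _ = ∑ h, |ee z₁ h x - ee z₂ h x| := one_mul _
        _ ≤ N * dist z₁ z₂ := h4
    have hcomp2 : ∀ z₁ z₂ : ↥Xset,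
        dist z₁ z₂ ≤ Real.exp (K * σ) * darbouxDist n N xbar σ K (ee z₁) (ee z₂) := by
      intro z₁ z₂
      obtain ⟨hd0, hkey⟩ := darbouxDistProps hb hK0 hσ (heeMem z₁) (heeMem z₂)
      have hRHS : 0 ≤ Real.exp (K * σ) * darbouxDist n N xbar σ K (ee z₁) (ee z₂) :=
        mul_nonneg (Real.exp_pos _).le hd0
      rw [Subtype.dist_eq, ContinuousMap.dist_le hRHS]
      intro x
      refine (dist_pi_le_iff hRHS).2 fun h => ?_
      rw [Real.dist_eq]
      have h2 := hkey ↑x x.2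
      have h1 : |z₁.1 x h - z₂.1 x h| ≤ ∑ m, |ee z₁ m ↑x - ee z₂ m ↑x| := by
        rw [← heeVal' z₁ x h, ← heeVal' z₂ x h]
        exact Finset.single_le_sum (f := fun m => |ee z₁ m ↑x - ee z₂ m ↑x|)
          (fun m _ => abs_nonneg _) (Finset.mem_univ h)
      have h3 : Real.exp (K * ∑ j, |(x : Fin n → ℝ) j - xbar j|) ≤ Real.exp (K * σ) :=
        Real.exp_le_exp.2 (mul_le_mul_of_nonneg_left x.2 hK0)
      calc |z₁.1 x h - z₂.1 x h| ≤ ∑ m, |ee z₁ m ↑x - ee z₂ m ↑x| := h1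
        _ ≤ Real.exp (K * ∑ j, |(x : Fin n → ℝ) j - xbar j|) *
              darbouxDist n N xbar σ K (ee z₁) (ee z₂) := h2
        _ ≤ Real.exp (K * σ) * darbouxDist n N xbar σ K (ee z₁) (ee z₂) :=
            mul_le_mul_of_nonneg_right h3 hd0
    -- choose the power making the iterate a contraction
    obtain ⟨m, hm⟩ := pow_unbounded_of_one_lt (2 * (Real.exp (K * σ) * N))
      (by norm_num : (1 : ℝ) < 2)
    have h2m : (0:ℝ) < 2 ^ m := by positivity
    have hdistm : ∀ z₁ z₂ : ↥Xset, dist (T^[m] z₁) (T^[m] z₂) ≤ (1 / 2) * dist z₁ z₂ := by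
      intro z₁ z₂
      have hmono : Real.exp (K * σ) * ((1 / 2 : ℝ) ^ m * N) ≤ 1 / 2 := by
        have heq : Real.exp (K * σ) * ((1 / 2 : ℝ) ^ m * N)
            = (Real.exp (K * σ) * N) / 2 ^ m := by
          rw [one_div, inv_pow]; ring
        rw [heq, div_le_iff₀ h2m]
        linarith
      calc dist (T^[m] z₁) (T^[m] z₂)
          ≤ Real.exp (K * σ) * darbouxDist n N xbar σ K (ee (T^[m] z₁)) (ee (T^[m] z₂)) :=
            hcomp2 _ _
        _ ≤ Real.exp (K * σ) * ((1 / 2) ^ m * darbouxDist n N xbar σ K (ee z₁) (ee z₂)) :=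
            mul_le_mul_of_nonneg_left (hiter m z₁ z₂) (Real.exp_pos _).le
        _ ≤ Real.exp (K * σ) * ((1 / 2) ^ m * (N * dist z₁ z₂)) := by
            refine mul_le_mul_of_nonneg_left ?_ (Real.exp_pos _).le
            exact mul_le_mul_of_nonneg_left (hcomp1 z₁ z₂) (by positivity)
        _ = (Real.exp (K * σ) * ((1 / 2 : ℝ) ^ m * N)) * dist z₁ z₂ := by ring
        _ ≤ (1 / 2) * dist z₁ z₂ := mul_le_mul_of_nonneg_right hmono dist_nonneg
    have hcontra : ContractingWith (1 / 2 : NNReal) (T^[m]) := by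
      constructor
      · rw [← NNReal.coe_lt_coe]
        norm_num
      · refine LipschitzWith.of_dist_le_mul fun z₁ z₂ => ?_
        have hc : ((1 / 2 : NNReal) : ℝ) = 1 / 2 := by norm_num
        rw [hc]
        exact hdistm z₁ z₂
    set z := ContractingWith.fixedPoint (T^[m]) hcontra with hz
    have hfix : T^[m] z = z := hcontra.fixedPoint_isFixedPt
    have hTz : T z = z := by
      have h1 : T^[m] (T z) = T z := by
        have h2 : T^[m] (T z) = T (T^[m] z) := by
          rw [← Function.iterate_succ_apply, Function.iterate_succ_apply']
        rw [h2, hfix]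
      have h3 : T z = z := by
        have := hcontra.fixedPoint_unique h1
        rw [← hz] at this
        exact this
      exact h3
    refine ⟨ee z, heeMem z, ?_⟩
    intro x hx h
    have h1 : darbouxPhi n N idx f φ xbar (ee z) h x = (T z).1 ⟨x, hx⟩ h :=
      (hTval z x hx h).symm
    rw [h1, hTz]
    exact (heeVal z x hx h).symm
  · -- uniqueness
    intro u v hu hv hufix hvfix x hx h
    have hK0 : 0 ≤ 2 * L * (N : ℝ) := by positivity
    obtain ⟨hd0, hkey⟩ := darbouxDistProps (K := 2 * L * N) hb hK0 hσ hu hv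
    have h1 := part1 u v hu hv
    rw [darbouxDistCongr (K := 2 * L * N) hufix hvfix] at h1
    have hd : darbouxDist n N xbar σ (2 * L * N) u v = 0 := le_antisymm (by linarith) hd0
    have h3 := hkey x hx
    rw [hd, mul_zero] at h3
    have h4 : |u h x - v h x| ≤ 0 :=
      le_trans (Finset.single_le_sum (f := fun m => |u m x - v m x|)
        (fun m _ => abs_nonneg _) (Finset.mem_univ h)) h3
    exact sub_eq_zero.1 (abs_eq_zero.1 (le_antisymm h4 (abs_nonneg _)))
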